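/- Let G be a 2-sum of connected multigraphs K and H along a two-element vertex set U, and let x, y be real numbers with (x−1)(y−1) = 1. Then T(G;x,y) = (y−1) · T(K;x,y) · T(H;x,y), and also T(G;x,y) = (x−1) · T(K/A;x,y) · T(H/A;x,y), where A ∈ Γ(U) is the one-block partition {U}. -/

import Mathlib

attribute [local instance] Classical.propDecidable

/-- A multigraph: a finite vertex type, a finite edge index type, and an endpoint
map sending each edge to an unordered pair of vertices. -/
structure Multigraph where
  V : Type
  E : Type
  [finV : Fintype V]
  [finE : Fintype E]
  ends : E → Sym2 V

attribute [instance] Multigraph.finV Multigraph.finE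

namespace Multigraph

/-- Two vertices are related if some edge of `S` has them as its endpoints. -/
def rel (G : Multigraph) (S : Finset G.E) (v w : G.V) : Prop :=
  ∃ e ∈ S, G.ends e = s(v, w)

/-- `ω(S)`: the number of connected components of the spanning subgraph `(V(G), S)`. -/
noncomputable def omega (G : Multigraph) (S : Finset G.E) : ℕ :=
  Nat.card (Quotient (Relation.EqvGen.setoid (G.rel S)))

/-- `ω(G)`: the number of connected components of `G`. -/
noncomputable def omegaG (G : Multigraph) : ℕ :=
  G.omega Finset.univ

/-- The Negami polynomial `f(G;t,x,y)`. -/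
noncomputable def negami (G : Multigraph) (t x y : ℝ) : ℝ :=
  ∑ S : Finset G.E, t ^ G.omega S * x ^ S.card * y ^ (Fintype.card G.E - S.card)

/-- The Tutte polynomial `T(G;x,y)`. -/
noncomputable def tutte (G : Multigraph) (x y : ℝ) : ℝ :=
  ∑ S : Finset G.E,
    (x - 1) ^ (G.omega S - G.omegaG) *
      (y - 1) ^ (G.omega S + S.card - Fintype.card G.V)

end Multigraph

/-- The setoid on `V` extending a setoid `A` on the subset `U`: its nontrivial
classes are exactly the blocks of `A`. -/
def extendSetoid {V : Type} (U : Set V) (A : Setoid U) : Setoid V where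
  r v w := v = w ∨ ∃ (hv : v ∈ U) (hw : w ∈ U), A.r ⟨v, hv⟩ ⟨w, hw⟩
  iseqv := by
    constructor
    · exact fun v => Or.inl rfl
    · rintro v w (rfl | ⟨hv, hw, h⟩)
      · exact Or.inl rfl
      · exact Or.inr ⟨hw, hv, A.symm h⟩
    · rintro v w z (rfl | ⟨hv, hw, h⟩) (rfl | ⟨hw', hz, h'⟩)
      · exact Or.inl rfl
      · exact Or.inr ⟨hw', hz, h'⟩
      · exact Or.inr ⟨hv, hw, h⟩
      · exact Or.inr ⟨hv, hz, A.trans h h'⟩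

namespace Multigraph

/-- The contraction `K/A` of a multigraph `K` by a partition `A` of a subset `U` of
its vertices: all vertices in a common block of `A` are identified. -/
noncomputable def contract (K : Multigraph) {U : Set K.V} (A : Setoid U) : Multigraph where
  V := Quotient (extendSetoid U A)
  E := K.E
  finV := Fintype.ofFinite _
  finE := K.finE
  ends e := (K.ends e).map (Quotient.mk (extendSetoid U A))

/-- `P(S)`: the partition of `U` in which two vertices lie in the same block iff they
lie in the same connected component of the spanning subgraph `(V(K), S)`. -/
def part (K : Multigraph) (U : Set K.V) (S : Finset K.E) : Setoid U :=
  Setoid.comap Subtype.val (Relation.EqvGen.setoid (K.rel S))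

/-- The auxiliary Negami polynomial `f_A(K;t,x,y)`. -/
noncomputable def negamiAux (K : Multigraph) (U : Set K.V) (A : Setoid U) (t x y : ℝ) : ℝ :=
  ∑ S : Finset K.E,
    if K.part U S = A then
      t ^ (K.omega S - Nat.card (Quotient A)) * x ^ S.card *
        y ^ (Fintype.card K.E - S.card)
    else 0

/-- The auxiliary Tutte polynomial `T_A(K;x,y)`. -/
noncomputable def tutteAux (K : Multigraph) (U : Set K.V) (A : Setoid U) (x y : ℝ) : ℝ :=
  ∑ S : Finset K.E,
    if K.part U S = A then
      (x - 1) ^ (K.omega S - Nat.card (Quotient A)) *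
        (y - 1) ^ (K.omega S + S.card - Fintype.card K.V)
    else 0

end Multigraph

/-- The set of partitions of a finite type is finite. -/
instance setoidFinite {α : Type} [Finite α] : Finite (Setoid α) :=
  Finite.of_injective (fun s : Setoid α => s.r) fun a b h => by
    cases a; cases b; simp only at h; subst h; rfl

noncomputable instance setoidFintype {α : Type} [Finite α] : Fintype (Setoid α) :=
  Fintype.ofFinite _

/-- The number of blocks `|A|` of a partition (setoid) `A`. -/
noncomputable def nblocks {α : Type} (A : Setoid α) : ℕ :=
  Nat.card (Quotient A)

/-- The matrix `T_n(t)` indexed by partitions of `α`, with `(A,B)`-entry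
`t^{|A∧B|}` where `A∧B` is the finest common coarsening (the join `A ⊔ B`). -/
noncomputable def Tmat (α : Type) [Finite α] (t : ℝ) :
    Matrix (Setoid α) (Setoid α) ℝ :=
  Matrix.of fun A B => t ^ nblocks (A ⊔ B)

/-- The matrix `L_n(x)` indexed by partitions of `α`, with `(A,B)`-entry
`(x-1)^{|A∧B|-1}` if `|A∧B| + n = |A| + |B|` and `0` otherwise. -/
noncomputable def Lmat (α : Type) [Finite α] (n : ℕ) (x : ℝ) :
    Matrix (Setoid α) (Setoid α) ℝ :=
  Matrix.of fun A B =>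
    if nblocks (A ⊔ B) + n = nblocks A + nblocks B then
      (x - 1) ^ (nblocks (A ⊔ B) - 1)
    else 0

/-- The connectivity matrix `A_n` indexed by partitions of `α`, with `(A,B)`-entry
`1` if `|A∧B| = 1` and `0` otherwise. -/
noncomputable def Amat (α : Type) [Finite α] :
    Matrix (Setoid α) (Setoid α) ℝ :=
  Matrix.of fun A B => if nblocks (A ⊔ B) = 1 then (1 : ℝ) else 0

/-- `G` is an `n`-sum of `K` and `H` along `U`: `V(G) = V(K) ∪ V(H)`,
`V(K) ∩ V(H) = U`, and `E(G)` is the disjoint union of `E(K)` and `E(H)` with the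
inherited endpoint maps. -/
structure NSum (G K H : Multigraph) (U : Set G.V) where
  ιK : K.V → G.V
  ιH : H.V → G.V
  injK : Function.Injective ιK
  injH : Function.Injective ιH
  cover : Set.range ιK ∪ Set.range ιH = Set.univ
  inter : Set.range ιK ∩ Set.range ιH = U
  edgeEquiv : G.E ≃ K.E ⊕ H.E
  endsK : ∀ a, G.ends (edgeEquiv.symm (Sum.inl a)) = (K.ends a).map ιK
  endsH : ∀ a, G.ends (edgeEquiv.symm (Sum.inr a)) = (H.ends a).map ιH

namespace NSum

variable {G K H : Multigraph} {U : Set G.V}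

/-- The copy of a partition `A` of `U` on the corresponding subset of `V(K)`. -/
def pullK (σ : NSum G K H U) (A : Setoid U) : Setoid (σ.ιK ⁻¹' U : Set K.V) :=
  Setoid.comap (fun v => ⟨σ.ιK v.1, v.2⟩) A

/-- The copy of a partition `A` of `U` on the corresponding subset of `V(H)`. -/
def pullH (σ : NSum G K H U) (A : Setoid U) : Setoid (σ.ιH ⁻¹' U : Set H.V) :=
  Setoid.comap (fun v => ⟨σ.ιH v.1, v.2⟩) A

/-- The contraction `K/A` for a partition `A` of the common vertex set `U`. -/
noncomputable def contractK (σ : NSum G K H U) (A : Setoid U) : Multigraph :=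
  K.contract (σ.pullK A)

/-- The contraction `H/B` for a partition `B` of the common vertex set `U`. -/
noncomputable def contractH (σ : NSum G K H U) (B : Setoid U) : Multigraph :=
  H.contract (σ.pullH B)

end NSum



section AuxProof
open Relation

namespace Multigraph

lemma omega_le_card' (G : Multigraph) (S : Finset G.E) : G.omega S ≤ Fintype.card G.V := by
  rw [← Nat.card_eq_fintype_card]
  exact Nat.card_le_card_of_surjective (Quotient.mk _) (fun q => Quotient.exists_rep q)

lemma omegaG_le_omega' (G : Multigraph) (S : Finset G.E) : G.omegaG ≤ G.omega S := by
  apply Nat.card_le_card_of_surjective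
    (Quotient.map' id (fun a b h => EqvGen.mono (fun a b hab => by
      obtain ⟨e, _, he⟩ := hab; exact ⟨e, Finset.mem_univ e, he⟩) _ _ h))
  intro q
  obtain ⟨a, rfl⟩ := Quotient.exists_rep q
  exact ⟨Quotient.mk _ a, rfl⟩

lemma nat_card_option' (α : Type) [Finite α] : Nat.card (Option α) = Nat.card α + 1 := by
  have := Fintype.ofFinite α
  simp [Nat.card_eq_fintype_card]

lemma omega_le_omega_insert_add_one' (G : Multigraph) (S : Finset G.E) (e : G.E) :
    G.omega S ≤ G.omega (insert e S) + 1 := by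
  obtain ⟨⟨a, b⟩, hab⟩ := Quot.exists_rep (G.ends e)
  have hab : G.ends e = s(a, b) := hab.symm
  set r := G.rel S with hr
  have key : ∀ x y, EqvGen (G.rel (insert e S)) x y →
      EqvGen r x y ∨ (EqvGen r x a ∧ EqvGen r b y) ∨ (EqvGen r x b ∧ EqvGen r a y) := by
    intro x y h
    induction h with
    | rel x y hxy =>
        obtain ⟨e', he', hend⟩ := hxy
        rcases Finset.mem_insert.mp he' with rfl | he'
        · rw [hab] at hend
          rcases Sym2.eq_iff.mp hend with ⟨rfl, rfl⟩ | ⟨rfl, rfl⟩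
          · exact Or.inr (Or.inl ⟨EqvGen.refl _, EqvGen.refl _⟩)
          · exact Or.inr (Or.inr ⟨EqvGen.refl _, EqvGen.refl _⟩)
        · exact Or.inl (EqvGen.rel _ _ ⟨e', he', hend⟩)
    | refl x => exact Or.inl (EqvGen.refl x)
    | symm x y _ ih =>
        rcases ih with h | ⟨h1, h2⟩ | ⟨h1, h2⟩
        · exact Or.inl h.symm
        · exact Or.inr (Or.inr ⟨h2.symm, h1.symm⟩)
        · exact Or.inr (Or.inl ⟨h2.symm, h1.symm⟩)
    | trans x y z _ _ ih1 ih2 =>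
        rcases ih1 with h | ⟨h1, h2⟩ | ⟨h1, h2⟩ <;>
          rcases ih2 with h' | ⟨h1', h2'⟩ | ⟨h1', h2'⟩
        · exact Or.inl (EqvGen.trans _ _ _ h h')
        · exact Or.inr (Or.inl ⟨EqvGen.trans _ _ _ h h1', h2'⟩)
        · exact Or.inr (Or.inr ⟨EqvGen.trans _ _ _ h h1', h2'⟩)
        · exact Or.inr (Or.inl ⟨h1, EqvGen.trans _ _ _ h2 h'⟩)
        · exact Or.inl (EqvGen.trans _ _ _ h1
            (EqvGen.trans _ _ _ ((EqvGen.trans _ _ _ h2 h1').symm) h2'))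
        · exact Or.inl (EqvGen.trans _ _ _ h1 h2')
        · exact Or.inr (Or.inr ⟨h1, EqvGen.trans _ _ _ h2 h'⟩)
        · exact Or.inl (EqvGen.trans _ _ _ h1 h2')
        · exact Or.inl (EqvGen.trans _ _ _ h1
            (EqvGen.trans _ _ _ ((EqvGen.trans _ _ _ h2 h1').symm) h2'))
  let π : Quotient (EqvGen.setoid r) → Quotient (EqvGen.setoid (G.rel (insert e S))) :=
    Quotient.map' id (fun u v h => EqvGen.mono (fun u v huv => by
      obtain ⟨e', he', hend⟩ := huv
      exact ⟨e', Finset.mem_insert_of_mem he', hend⟩) _ _ h)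
  let f : Quotient (EqvGen.setoid r) → Option (Quotient (EqvGen.setoid (G.rel (insert e S)))) :=
    fun q => if q = Quotient.mk _ b then none else some (π q)
  have hf : Function.Injective f := by
    intro u v huv
    by_cases hu : u = Quotient.mk _ b <;> by_cases hv : v = Quotient.mk _ b
    · rw [hu, hv]
    · simp only [f, if_pos hu, if_neg hv] at huv; exact absurd huv (by simp)
    · simp only [f, if_neg hu, if_pos hv] at huv; exact absurd huv (by simp)
    · simp only [f, if_neg hu, if_neg hv, Option.some.injEq] at huv
      obtain ⟨xu, rfl⟩ := Quotient.exists_rep u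
      obtain ⟨xv, rfl⟩ := Quotient.exists_rep v
      have h2 : EqvGen (G.rel (insert e S)) xu xv := Quotient.eq''.mp huv
      rcases key _ _ h2 with h | ⟨ha, hb2⟩ | ⟨ha, hb2⟩
      · exact Quotient.sound h
      · exact absurd (Quotient.sound hb2.symm : Quotient.mk _ xv = Quotient.mk _ b) hv
      · exact absurd (Quotient.sound ha : Quotient.mk _ xu = Quotient.mk _ b) hu
  have := Nat.card_le_card_of_injective f hf
  rwa [nat_card_option'] at this

lemma card_le_omega_add' (G : Multigraph) (S : Finset G.E) :
    Fintype.card G.V ≤ G.omega S + S.card := by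
  classical
  induction S using Finset.induction with
  | empty =>
      simp only [Finset.card_empty, add_zero]
      rw [← Nat.card_eq_fintype_card]
      apply Nat.card_le_card_of_injective (Quotient.mk _)
      intro u v h
      have h' : EqvGen (G.rel ∅) u v := Quotient.eq''.mp h
      clear h
      induction h' with
      | rel x y hxy => obtain ⟨e, he, _⟩ := hxy; exact absurd he (by simp)
      | refl => rfl
      | symm _ _ _ ih => exact ih.symm
      | trans _ _ _ _ _ ih1 ih2 => exact ih1.trans ih2
  | @insert e T hnot ih =>
      have h1 := G.omega_le_omega_insert_add_one' T e
      rw [Finset.card_insert_of_notMem hnot]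
      omega

lemma sum_pow_card_aux (α : Type) [Fintype α] (c : ℝ) :
    ∑ S : Finset α, c ^ S.card = (c + 1) ^ Fintype.card α := by
  classical
  have h := Finset.prod_add (fun _ : α => c) (fun _ => (1 : ℝ)) Finset.univ
  simp only [Finset.prod_const, Finset.prod_const_one, mul_one, Finset.powerset_univ,
    Finset.card_univ, one_pow] at h
  exact h.symm

lemma tutte_hyperbola (G : Multigraph) {x y : ℝ} (hxy : (x - 1) * (y - 1) = 1) :
    G.tutte x y
      = y ^ Fintype.card G.E * (y - 1) ^ ((G.omegaG : ℤ) - (Fintype.card G.V : ℤ)) := by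
  have hy : y - 1 ≠ 0 := fun h => by simp [h] at hxy
  have hx : x - 1 = (y - 1)⁻¹ := by
    field_simp
    linarith [hxy]
  unfold tutte
  have hterm : ∀ S : Finset G.E,
      (x - 1) ^ (G.omega S - G.omegaG) * (y - 1) ^ (G.omega S + S.card - Fintype.card G.V)
        = (y - 1) ^ (S.card : ℤ) *
            (y - 1) ^ ((G.omegaG : ℤ) - (Fintype.card G.V : ℤ)) := by
    intro S
    rw [hx, ← zpow_natCast ((y - 1)⁻¹), ← zpow_natCast (y - 1), inv_zpow, ← zpow_neg,
      ← zpow_add₀ hy, ← zpow_add₀ hy]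
    congr 1
    have := G.omegaG_le_omega' S
    have := G.card_le_omega_add' S
    omega
  rw [Finset.sum_congr rfl fun S _ => hterm S, ← Finset.sum_mul]
  congr 1
  have h1 : ∀ S : Finset G.E, (y - 1) ^ (S.card : ℤ) = (y - 1) ^ S.card :=
    fun S => zpow_natCast _ _
  rw [Finset.sum_congr rfl fun S _ => h1 S, sum_pow_card_aux, sub_add_cancel]

lemma omegaG_eq_one_iff (G : Multigraph) :
    G.omegaG = 1 ↔ Nonempty G.V ∧ ∀ v w : G.V, EqvGen (G.rel Finset.univ) v w := by
  unfold omegaG omega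
  rw [Nat.card_eq_one_iff_unique]
  constructor
  · rintro ⟨hsub, hne⟩
    obtain ⟨q⟩ := hne
    obtain ⟨v0, rfl⟩ := Quotient.exists_rep q
    refine ⟨⟨v0⟩, fun v w => ?_⟩
    have h : (Quotient.mk _ v : Quotient (EqvGen.setoid (G.rel Finset.univ)))
        = Quotient.mk _ w := Subsingleton.elim _ _
    exact Quotient.eq''.mp h
  · rintro ⟨⟨v0⟩, h⟩
    refine ⟨⟨fun q q' => ?_⟩, ⟨Quotient.mk _ v0⟩⟩
    obtain ⟨v, rfl⟩ := Quotient.exists_rep q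
    obtain ⟨w, rfl⟩ := Quotient.exists_rep q'
    exact Quotient.sound (h v w)

lemma contract_lift (K : Multigraph) {W : Set K.V} (A : Setoid W) {v w : K.V}
    (h : EqvGen (K.rel Finset.univ) v w) :
    EqvGen ((K.contract A).rel Finset.univ)
      (Quotient.mk (extendSetoid W A) v) (Quotient.mk (extendSetoid W A) w) := by
  induction h with
  | rel v w hvw =>
      obtain ⟨e, _, he⟩ := hvw
      refine EqvGen.rel _ _ ⟨e, Finset.mem_univ _, ?_⟩
      show (K.ends e).map _ = _
      rw [he, Sym2.map_pair_eq]
      rfl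
  | refl v => exact EqvGen.refl _
  | symm _ _ _ ih => exact ih.symm
  | trans _ _ _ _ _ ih1 ih2 => exact EqvGen.trans _ _ _ ih1 ih2

lemma contract_connected (K : Multigraph) {W : Set K.V} (A : Setoid W) (hK : K.omegaG = 1) :
    (K.contract A).omegaG = 1 := by
  obtain ⟨⟨v0⟩, hrel⟩ := (omegaG_eq_one_iff K).mp hK
  rw [omegaG_eq_one_iff]
  refine ⟨⟨Quotient.mk _ v0⟩, fun q q' => ?_⟩
  obtain ⟨v, rfl⟩ := Quotient.exists_rep q
  obtain ⟨w, rfl⟩ := Quotient.exists_rep q'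
  exact K.contract_lift A (hrel v w)

/-- Contracting a two-element subset to a point drops the vertex count by one. -/
lemma contract_card_vertices (K : Multigraph) {W : Set K.V} (hW : Nat.card W = 2) :
    Fintype.card (K.contract (⊤ : Setoid W)).V + 1 = Fintype.card K.V := by
  obtain ⟨a, b, hab, habU⟩ := Nat.card_eq_two_iff.mp hW
  have hmem : ∀ u : W, u = a ∨ u = b := by
    intro u
    have : u ∈ ({a, b} : Set W) := by rw [habU]; trivial
    simpa using this
  have hcoeab : (a : K.V) ≠ (b : K.V) := fun h => hab (Subtype.ext h)
  let f : {v : K.V // v ≠ (b : K.V)} → (K.contract (⊤ : Setoid W)).V :=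
    fun v => Quotient.mk (extendSetoid W ⊤) v.1
  have hinj : Function.Injective f := by
    rintro ⟨v, hv⟩ ⟨w, hw⟩ hvw
    have h := Quotient.eq''.mp hvw
    rcases h with rfl | ⟨hvW, hwW, -⟩
    · rfl
    · have hv' : (⟨v, hvW⟩ : W) = a := by
        rcases hmem ⟨v, hvW⟩ with h | h
        · exact h
        · exact absurd (congrArg Subtype.val h) hv
      have hw' : (⟨w, hwW⟩ : W) = a := by
        rcases hmem ⟨w, hwW⟩ with h | h
        · exact h
        · exact absurd (congrArg Subtype.val h) hw
      have : v = w := by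
        have h1 := congrArg Subtype.val hv'
        have h2 := congrArg Subtype.val hw'
        simp only at h1 h2
        rw [h1, h2]
      exact Subtype.ext this
  have hsurj : Function.Surjective f := by
    intro q
    obtain ⟨v, rfl⟩ := Quotient.exists_rep q
    by_cases hv : v = (b : K.V)
    · refine ⟨⟨(a : K.V), hcoeab⟩, ?_⟩
      subst hv
      exact Quotient.sound (Or.inr ⟨a.2, b.2, trivial⟩)
    · exact ⟨⟨v, hv⟩, rfl⟩
  have hcard : Nat.card {v : K.V // v ≠ (b : K.V)} = Nat.card (K.contract (⊤ : Setoid W)).V :=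
    Nat.card_eq_of_bijective f ⟨hinj, hsurj⟩
  have hsplit : Nat.card {v : K.V // v ≠ (b : K.V)} + 1 = Nat.card K.V := by
    classical
    rw [Nat.card_eq_fintype_card, Nat.card_eq_fintype_card]
    have h1 : Fintype.card {v : K.V // v = (b : K.V)} = 1 := Fintype.card_subtype_eq _
    have h2 := Fintype.card_subtype_compl (fun v : K.V => v = (b : K.V))
    have h3 : 1 ≤ Fintype.card K.V := Fintype.card_pos_iff.mpr ⟨(b : K.V)⟩
    have h4 : Fintype.card {v : K.V // ¬v = (b : K.V)}
        = Fintype.card {v : K.V // v ≠ (b : K.V)} := by congr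
    omega
  rw [← Nat.card_eq_fintype_card, ← Nat.card_eq_fintype_card, ← hcard, hsplit]

end Multigraph

end AuxProof


lemma zpow_split1 (y : ℝ) (hy : y - 1 ≠ 0) (a b c : ℤ) (h : a = 1 + b + c) :
    (y - 1) ^ a = (y - 1) * (y - 1) ^ b * (y - 1) ^ c := by
  subst h
  rw [zpow_add₀ hy, zpow_add₀ hy, zpow_one]

lemma zpow_split2 (y : ℝ) (hy : y - 1 ≠ 0) (a b c : ℤ) (h : a = -1 + b + c) :
    (y - 1) ^ a = (y - 1)⁻¹ * (y - 1) ^ b * (y - 1) ^ c := by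
  subst h
  rw [zpow_add₀ hy, zpow_add₀ hy, zpow_neg_one]

/-- the two splittings of the Tutte polynomial of a `2`-sum of
connected multigraphs on the curve `(x−1)(y−1) = 1`. -/
theorem two_sum_splitting_on_hyperbola
    (G K H : Multigraph) (U : Set G.V) (sg : NSum G K H U)
    (hU : Nat.card ↥U = 2) (hK : K.omegaG = 1) (hH : H.omegaG = 1)
    (x y : ℝ) (hxy : (x - 1) * (y - 1) = 1) :
    G.tutte x y = (y - 1) * K.tutte x y * H.tutte x y ∧
    G.tutte x y = (x - 1) * (sg.contractK ⊤).tutte x y * (sg.contractH ⊤).tutte x y := by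
  have hy : y - 1 ≠ 0 := fun h => by simp [h] at hxy
  have hx1 : x - 1 = (y - 1)⁻¹ := by
    field_simp
    linarith [hxy]
  obtain ⟨hKne, hKrel⟩ := (Multigraph.omegaG_eq_one_iff K).mp hK
  obtain ⟨hHne, hHrel⟩ := (Multigraph.omegaG_eq_one_iff H).mp hH
  have hUne : Nonempty U := by
    have h1 : 0 < Nat.card U := by omega
    exact (Nat.card_pos_iff.mp h1).1
  obtain ⟨u0⟩ := hUne
  have hu0 : (u0 : G.V) ∈ Set.range sg.ιK ∩ Set.range sg.ιH := by
    rw [sg.inter]; exact u0.2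
  obtain ⟨⟨ka, hka⟩, ⟨hb, hhb⟩⟩ := hu0
  have liftK : ∀ {v w : K.V}, Relation.EqvGen (K.rel Finset.univ) v w →
      Relation.EqvGen (G.rel Finset.univ) (sg.ιK v) (sg.ιK w) := by
    intro v w h
    induction h with
    | rel v w hvw =>
        obtain ⟨e, _, he⟩ := hvw
        refine Relation.EqvGen.rel _ _ ⟨sg.edgeEquiv.symm (Sum.inl e), Finset.mem_univ _, ?_⟩
        rw [sg.endsK e, he, Sym2.map_pair_eq]
    | refl v => exact Relation.EqvGen.refl _
    | symm _ _ _ ih => exact ih.symm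
    | trans _ _ _ _ _ ih1 ih2 => exact Relation.EqvGen.trans _ _ _ ih1 ih2
  have liftH : ∀ {v w : H.V}, Relation.EqvGen (H.rel Finset.univ) v w →
      Relation.EqvGen (G.rel Finset.univ) (sg.ιH v) (sg.ιH w) := by
    intro v w h
    induction h with
    | rel v w hvw =>
        obtain ⟨e, _, he⟩ := hvw
        refine Relation.EqvGen.rel _ _ ⟨sg.edgeEquiv.symm (Sum.inr e), Finset.mem_univ _, ?_⟩
        rw [sg.endsH e, he, Sym2.map_pair_eq]
    | refl v => exact Relation.EqvGen.refl _
    | symm _ _ _ ih => exact ih.symm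
    | trans _ _ _ _ _ ih1 ih2 => exact Relation.EqvGen.trans _ _ _ ih1 ih2
  have hG : G.omegaG = 1 := by
    rw [Multigraph.omegaG_eq_one_iff]
    have main : ∀ v : G.V, Relation.EqvGen (G.rel Finset.univ) v (u0 : G.V) := by
      intro v
      have hv : v ∈ Set.range sg.ιK ∪ Set.range sg.ιH := by rw [sg.cover]; trivial
      rcases hv with ⟨k, rfl⟩ | ⟨h', rfl⟩
      · have h2 := liftK (hKrel k ka); rwa [hka] at h2
      · have h2 := liftH (hHrel h' hb); rwa [hhb] at h2
    exact ⟨⟨(u0 : G.V)⟩, fun v w => Relation.EqvGen.trans _ _ _ (main v) ((main w).symm)⟩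
  have hKc : (sg.contractK ⊤).omegaG = 1 := K.contract_connected _ hK
  have hHc : (sg.contractH ⊤).omegaG = 1 := H.contract_connected _ hH
  have cardE : Fintype.card G.E = Fintype.card K.E + Fintype.card H.E := by
    rw [← Nat.card_eq_fintype_card, ← Nat.card_eq_fintype_card, ← Nat.card_eq_fintype_card,
      Nat.card_congr sg.edgeEquiv, Nat.card_sum]
  have cardV : Fintype.card G.V + 2 = Fintype.card K.V + Fintype.card H.V := by
    have h := Set.ncard_union_add_ncard_inter (Set.range sg.ιK) (Set.range sg.ιH)
      (Set.toFinite _) (Set.toFinite _)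
    rw [sg.cover, sg.inter, Set.ncard_univ] at h
    have hK' : (Set.range sg.ιK).ncard = Nat.card K.V := by
      rw [← Nat.card_coe_set_eq, Nat.card_range_of_injective sg.injK]
    have hH' : (Set.range sg.ιH).ncard = Nat.card H.V := by
      rw [← Nat.card_coe_set_eq, Nat.card_range_of_injective sg.injH]
    have hU' : U.ncard = 2 := by rw [← Nat.card_coe_set_eq, hU]
    rw [hK', hH', hU'] at h
    simp only [← Nat.card_eq_fintype_card]
    omega
  have pullKtop : sg.pullK (⊤ : Setoid U) = ⊤ := Setoid.ext fun a b => by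
    constructor <;> intro <;> trivial
  have pullHtop : sg.pullH (⊤ : Setoid U) = ⊤ := Setoid.ext fun a b => by
    constructor <;> intro <;> trivial
  have cardWK : Nat.card (sg.ιK ⁻¹' U : Set K.V) = 2 := by
    rw [← hU]
    apply Nat.card_eq_of_bijective (fun v : (sg.ιK ⁻¹' U : Set K.V) => (⟨sg.ιK v.1, v.2⟩ : U))
    constructor
    · rintro ⟨v, hv⟩ ⟨w, hw⟩ h
      exact Subtype.ext (sg.injK (congrArg Subtype.val h))
    · rintro ⟨u, hu⟩
      have h1 : u ∈ Set.range sg.ιK := by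
        rw [← sg.inter] at hu; exact hu.1
      obtain ⟨v, rfl⟩ := h1
      exact ⟨⟨v, hu⟩, rfl⟩
  have cardWH : Nat.card (sg.ιH ⁻¹' U : Set H.V) = 2 := by
    rw [← hU]
    apply Nat.card_eq_of_bijective (fun v : (sg.ιH ⁻¹' U : Set H.V) => (⟨sg.ιH v.1, v.2⟩ : U))
    constructor
    · rintro ⟨v, hv⟩ ⟨w, hw⟩ h
      exact Subtype.ext (sg.injH (congrArg Subtype.val h))
    · rintro ⟨u, hu⟩
      have h1 : u ∈ Set.range sg.ιH := by
        rw [← sg.inter] at hu; exact hu.2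
      obtain ⟨v, rfl⟩ := h1
      exact ⟨⟨v, hu⟩, rfl⟩
  have cardVK : Fintype.card (sg.contractK ⊤).V + 1 = Fintype.card K.V := by
    unfold NSum.contractK
    rw [pullKtop]
    exact K.contract_card_vertices cardWK
  have cardVH : Fintype.card (sg.contractH ⊤).V + 1 = Fintype.card H.V := by
    unfold NSum.contractH
    rw [pullHtop]
    exact H.contract_card_vertices cardWH
  have cardEK : Fintype.card (sg.contractK ⊤).E = Fintype.card K.E := rfl
  have cardEH : Fintype.card (sg.contractH ⊤).E = Fintype.card H.E := rfl
  rw [G.tutte_hyperbola hxy, K.tutte_hyperbola hxy, H.tutte_hyperbola hxy,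
    (sg.contractK ⊤).tutte_hyperbola hxy, (sg.contractH ⊤).tutte_hyperbola hxy,
    hG, hK, hH, hKc, hHc, cardEK, cardEH, cardE]
  constructor
  · rw [pow_add,
      zpow_split1 y hy _ (((1 : ℕ) : ℤ) - (Fintype.card K.V : ℤ))
        (((1 : ℕ) : ℤ) - (Fintype.card H.V : ℤ)) (by push_cast; omega)]
    ring
  · rw [hx1, pow_add,
      zpow_split2 y hy _ (((1 : ℕ) : ℤ) - (Fintype.card (sg.contractK ⊤).V : ℤ))
        (((1 : ℕ) : ℤ) - (Fintype.card (sg.contractH ⊤).V : ℤ)) (by push_cast; omega)]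
    ring
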